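/- Fix integers D ≥ 0 and β₁ > 1, and integers β₂, …, β_n with β_{i} ≥ β_{i−1}^{D+1} for i = 2, …, n. Let m₁ = x₁^{k₁}⋯x_n^{k_n} and m₂ = x₁^{s₁}⋯x_n^{s_n} be monomials with all exponents at most D, and suppose m₁ > m₂ in the lexicographic order with x₁ ≺ x₂ ≺ ⋯ ≺ x_n. Then β₁^{k₁}⋯β_n^{k_n} > β₁^{s₁}⋯β_n^{s_n}, and moreover (β₁^{s₁}⋯β_n^{s_n})/(β₁^{k₁}⋯β_n^{k_n}) ≤ 1/β₁. -/

import Mathlib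

theorem stmt10 (n D : ℕ) (hn : 0 < n) (β : Fin n → ℤ)
    (hβ1 : 1 < β ⟨0, hn⟩)
    (hchain : ∀ i j : Fin n, (i : ℕ) + 1 = (j : ℕ) → β i ^ (D + 1) ≤ β j)
    (k s : Fin n → ℕ) (hk : ∀ i, k i ≤ D) (hs : ∀ i, s i ≤ D)
    (hlex : ∃ j : Fin n, s j < k j ∧ ∀ i, j < i → k i = s i) :
    (∏ i, β i ^ s i) < (∏ i, β i ^ k i) ∧
    (∏ i, (β i : ℚ) ^ s i) / (∏ i, (β i : ℚ) ^ k i) ≤ 1 / (β ⟨0, hn⟩ : ℚ) := by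
  obtain ⟨j, hjs, hjk⟩ := hlex
  set b : ℕ → ℤ := fun m => if h : m < n then β ⟨m, h⟩ else 2 with hb
  set K : ℕ → ℕ := fun m => if h : m < n then k ⟨m, h⟩ else 0 with hK
  set S : ℕ → ℕ := fun m => if h : m < n then s ⟨m, h⟩ else 0 with hS
  have hb1' : ∀ m, ∀ h : m < n, 1 < β ⟨m, h⟩ := by
    intro m
    induction m with
    | zero => intro h; exact hβ1
    | succ p ih =>
      intro h
      have hp : p < n := Nat.lt_of_succ_lt h
      have hch := hchain ⟨p, hp⟩ ⟨p+1, h⟩ rfl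
      calc (1:ℤ) < β ⟨p, hp⟩ ^ (D+1) := one_lt_pow₀ (ih hp) (by omega)
        _ ≤ β ⟨p+1, h⟩ := hch
  have hb1 : ∀ m, 1 < b m := by
    intro m
    simp only [hb]
    split
    · exact hb1' m _
    · norm_num
  have hbpos : ∀ m, 0 < b m := fun m => lt_trans one_pos (hb1 m)
  have hBB : ∀ m, m < n → b 0 * ∏ l ∈ Finset.range m, b l ^ D ≤ b m := by
    intro m
    induction m with
    | zero => intro h; simp
    | succ p ih =>
      intro h
      have hp : p < n := Nat.lt_of_succ_lt h
      have hch : b p ^ (D+1) ≤ b (p+1) := by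
        simp only [hb]
        rw [dif_pos hp, dif_pos h]
        exact hchain ⟨p, hp⟩ ⟨p+1, h⟩ rfl
      calc b 0 * ∏ l ∈ Finset.range (p+1), b l ^ D
          = (b 0 * ∏ l ∈ Finset.range p, b l ^ D) * b p ^ D := by
            rw [Finset.prod_range_succ]; ring
        _ ≤ b p * b p ^ D :=
            mul_le_mul_of_nonneg_right (ih hp) (pow_nonneg (hbpos p).le D)
        _ = b p ^ (D+1) := by ring
        _ ≤ b (p+1) := hch
  have hPk : (∏ i, β i ^ k i) = ∏ m ∈ Finset.range n, b m ^ K m := by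
    rw [← Fin.prod_univ_eq_prod_range (fun m => b m ^ K m) n]
    apply Finset.prod_congr rfl
    intro i _
    simp only [hb, hK, dif_pos i.isLt, Fin.eta]
  have hPs : (∏ i, β i ^ s i) = ∏ m ∈ Finset.range n, b m ^ S m := by
    rw [← Fin.prod_univ_eq_prod_range (fun m => b m ^ S m) n]
    apply Finset.prod_congr rfl
    intro i _
    simp only [hb, hS, dif_pos i.isLt, Fin.eta]
  set J : ℕ := (j : ℕ) with hJ
  have hJn : J + 1 ≤ n := j.isLt
  have hsplit : ∀ f : ℕ → ℤ, ∏ m ∈ Finset.range n, f m =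
      ((∏ m ∈ Finset.range J, f m) * f J) * ∏ m ∈ Finset.Ico (J+1) n, f m := by
    intro f
    rw [← Finset.prod_range_succ, Finset.prod_range_mul_prod_Ico f hJn]
  have hKJ : K J = k j := by simp only [hK, hJ, dif_pos j.isLt, Fin.eta]
  have hSJ : S J = s j := by simp only [hS, hJ, dif_pos j.isLt, Fin.eta]
  have htail : ∀ m ∈ Finset.Ico (J+1) n, b m ^ K m = b m ^ S m := by
    intro m hm
    rw [Finset.mem_Ico] at hm
    have hmn : m < n := hm.2
    have hjm : j < (⟨m, hmn⟩ : Fin n) := by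
      rw [Fin.lt_def]
      show (j : ℕ) < m
      omega
    simp only [hK, hS, dif_pos hmn, hjk _ hjm]
  set T : ℤ := ∏ m ∈ Finset.Ico (J+1) n, b m ^ S m with hT
  have hTpos : 0 < T := Finset.prod_pos fun m _ => pow_pos (hbpos m) _
  have hkey : b 0 * ∏ m ∈ Finset.range n, b m ^ S m ≤ ∏ m ∈ Finset.range n, b m ^ K m := by
    rw [hsplit (fun m => b m ^ S m), hsplit (fun m => b m ^ K m),
      Finset.prod_congr rfl htail]
    simp only [← hT]
    have h1 : ∏ m ∈ Finset.range J, b m ^ S m ≤ ∏ m ∈ Finset.range J, b m ^ D := by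
      apply Finset.prod_le_prod
      · intro m _; exact pow_nonneg (hbpos m).le _
      · intro m hm
        apply pow_le_pow_right₀ (hb1 m).le
        simp only [hS]; split
        · exact hs _
        · omega
    have h2 : (b 0 * ∏ m ∈ Finset.range J, b m ^ D) * (b J ^ S J) ≤ b J * b J ^ S J :=
      mul_le_mul_of_nonneg_right (hBB J j.isLt) (pow_nonneg (hbpos J).le _)
    have h3 : b J * b J ^ S J = b J ^ (S J + 1) := by ring
    have h4 : b J ^ (S J + 1) ≤ b J ^ K J := by
      apply pow_le_pow_right₀ (hb1 J).le
      rw [hKJ, hSJ]; omega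
    have h5 : (1:ℤ) ≤ ∏ m ∈ Finset.range J, b m ^ K m := by
      have h : (0:ℤ) < ∏ m ∈ Finset.range J, b m ^ K m :=
        Finset.prod_pos fun m _ => pow_pos (hbpos m) (K m)
      omega
    have h6 : b 0 * ((∏ m ∈ Finset.range J, b m ^ S m) * b J ^ S J) ≤ b J ^ K J :=
      calc b 0 * ((∏ m ∈ Finset.range J, b m ^ S m) * b J ^ S J)
          ≤ b 0 * ((∏ m ∈ Finset.range J, b m ^ D) * b J ^ S J) := by
            apply mul_le_mul_of_nonneg_left _ (hbpos 0).le
            exact mul_le_mul_of_nonneg_right h1 (pow_nonneg (hbpos J).le _)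
        _ = (b 0 * ∏ m ∈ Finset.range J, b m ^ D) * (b J ^ S J) := by ring
        _ ≤ b J * b J ^ S J := h2
        _ = b J ^ (S J + 1) := h3
        _ ≤ b J ^ K J := h4
    calc b 0 * ((∏ m ∈ Finset.range J, b m ^ S m) * b J ^ S J * T)
        = (b 0 * ((∏ m ∈ Finset.range J, b m ^ S m) * b J ^ S J)) * T := by ring
      _ ≤ b J ^ K J * T := mul_le_mul_of_nonneg_right h6 hTpos.le
      _ = 1 * (b J ^ K J * T) := by ring
      _ ≤ (∏ m ∈ Finset.range J, b m ^ K m) * (b J ^ K J * T) := by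
          exact mul_le_mul_of_nonneg_right h5
            (mul_nonneg (pow_nonneg (hbpos J).le _) hTpos.le)
      _ = (∏ m ∈ Finset.range J, b m ^ K m) * b J ^ K J * T := by ring
  have hb0 : b 0 = β ⟨0, hn⟩ := by simp only [hb, dif_pos hn]
  have hPspos : 0 < ∏ i, β i ^ s i := by
    rw [hPs]; exact Finset.prod_pos fun m _ => pow_pos (hbpos m) _
  have hPkpos : 0 < ∏ i, β i ^ k i := by
    rw [hPk]; exact Finset.prod_pos fun m _ => pow_pos (hbpos m) _
  have hkey' : β ⟨0, hn⟩ * (∏ i, β i ^ s i) ≤ ∏ i, β i ^ k i := by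
    rw [hPs, hPk, ← hb0]; exact hkey
  constructor
  · have h0 : (∏ i, β i ^ s i) < β ⟨0, hn⟩ * (∏ i, β i ^ s i) := by nlinarith
    exact lt_of_lt_of_le h0 hkey'
  · have hcs : (∏ i, (β i : ℚ) ^ s i) = ((∏ i, β i ^ s i : ℤ) : ℚ) := by push_cast; rfl
    have hck : (∏ i, (β i : ℚ) ^ k i) = ((∏ i, β i ^ k i : ℤ) : ℚ) := by push_cast; rfl
    rw [hcs, hck, div_le_div_iff₀ (by exact_mod_cast hPkpos) (by positivity)]
    have : ((β ⟨0, hn⟩ * (∏ i, β i ^ s i) : ℤ) : ℚ) ≤ ((∏ i, β i ^ k i : ℤ) : ℚ) := by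
      exact_mod_cast hkey'
    push_cast at this ⊢
    linarith
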